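/- Let p_m = (k+1) / [k(m+1)·binom(m+2+1/k, m+1)] for m ≥ 0, where binom denotes the generalized binomial coefficient. Then (p_m)_{m≥0} is a probability mass function, i.e., p_m ≥ 0 for all m and ∑_{m≥0} p_m = 1. -/
import Mathlib


/-- Generalized binomial coefficient `binom(x, n) = x(x-1)⋯(x-n+1)/n!`. -/
noncomputable def gbinom (x : ℝ) (n : ℕ) : ℝ :=
  (∏ i ∈ Finset.range n, (x - i)) / (Nat.factorial n)

/-- The limiting out-degree probabilities
`p_m = (k+1)/(k(m+1) binom(m+2+1/k, m+1))`. -/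
noncomputable def pLim (k m : ℕ) : ℝ :=
  ((k : ℝ) + 1) / ((k : ℝ) * ((m : ℝ) + 1) * gbinom ((m : ℝ) + 2 + 1 / (k : ℝ)) (m + 1))

noncomputable def Dprod (k m : ℕ) : ℝ := ∏ j ∈ Finset.range m, ((j : ℝ) + 2 + 1 / (k : ℝ))

noncomputable def tAux (k m : ℕ) : ℝ :=
  ∏ j ∈ Finset.range m, ((j : ℝ) + 1) / ((j : ℝ) + 2 + 1 / (k : ℝ))

lemma Dpos (k m : ℕ) : 0 < Dprod k m := by
  apply Finset.prod_pos
  intro j _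
  have : (0:ℝ) ≤ 1 / (k : ℝ) := by positivity
  positivity

lemma gbinom_eq (k m : ℕ) :
    gbinom ((m : ℝ) + 2 + 1 / (k : ℝ)) (m + 1) = Dprod k (m + 1) / (Nat.factorial (m + 1)) := by
  unfold gbinom Dprod
  congr 1
  rw [← Finset.prod_range_reflect (fun j => (j : ℝ) + 2 + 1 / (k : ℝ)) (m + 1)]
  apply Finset.prod_congr rfl
  intro j hj
  simp only [Finset.mem_range] at hj
  have hj' : j ≤ m := Nat.lt_succ_iff.mp hj
  have h1 : m + 1 - 1 - j = m - j := by omega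
  rw [h1, Nat.cast_sub hj']
  ring

lemma tAux_eq (k m : ℕ) : tAux k m = (Nat.factorial m : ℝ) / Dprod k m := by
  unfold tAux Dprod
  rw [Finset.prod_div_distrib]
  congr 1
  rw [← Finset.prod_range_add_one_eq_factorial m]
  push_cast
  rfl

lemma pLim_eq {k : ℕ} (hk : 1 ≤ k) (m : ℕ) :
    pLim k m = tAux k m - tAux k (m + 1) := by
  have hk' : (0:ℝ) < k := by exact_mod_cast hk
  have hD := Dpos k m
  have hD1 := Dpos k (m + 1)
  have hDsucc : Dprod k (m + 1) = Dprod k m * ((m : ℝ) + 2 + 1 / (k : ℝ)) :=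
    Finset.prod_range_succ _ _
  have hfac : ((m + 1).factorial : ℝ) = (m.factorial : ℝ) * ((m : ℝ) + 1) := by
    push_cast [Nat.factorial_succ]; ring
  have hfacpos : (0:ℝ) < (m.factorial : ℝ) := by positivity
  rw [pLim, gbinom_eq, tAux_eq, tAux_eq, hDsucc, hfac]
  have hm1 : (0:ℝ) < (m : ℝ) + 1 := by positivity
  have hm2 : (0:ℝ) < (m : ℝ) + 2 + 1 / (k : ℝ) := by positivity
  field_simp
  ring

lemma tAux_nonneg (k m : ℕ) : 0 ≤ tAux k m := by
  apply Finset.prod_nonneg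
  intro j _
  have : (0:ℝ) ≤ 1 / (k : ℝ) := by positivity
  positivity

lemma prod_ratio (m : ℕ) :
    ∏ j ∈ Finset.range m, ((j : ℝ) + 1) / ((j : ℝ) + 2) = 1 / ((m : ℝ) + 1) := by
  induction m with
  | zero => simp
  | succ n ih =>
    rw [Finset.prod_range_succ, ih]
    have h1 : ((n : ℝ) + 1) ≠ 0 := by positivity
    have h2 : ((n : ℝ) + 2) ≠ 0 := by positivity
    push_cast
    field_simp
    ring

lemma tAux_le (k : ℕ) (hk : 1 ≤ k) (m : ℕ) : tAux k m ≤ 1 / ((m : ℝ) + 1) := by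
  rw [← prod_ratio m]
  unfold tAux
  apply Finset.prod_le_prod
  · intro j _
    have : (0:ℝ) ≤ 1 / (k : ℝ) := by positivity
    positivity
  · intro j _
    have h0 : (0:ℝ) ≤ (j : ℝ) + 1 := by positivity
    have h2 : (0:ℝ) < (j : ℝ) + 2 := by positivity
    have h1k : (0:ℝ) ≤ 1 / (k : ℝ) := by positivity
    exact div_le_div_of_nonneg_left h0 h2 (by linarith)

lemma tAux_tendsto (k : ℕ) (hk : 1 ≤ k) :
    Filter.Tendsto (fun m => tAux k m) Filter.atTop (nhds 0) := by
  apply squeeze_zero (fun m => tAux_nonneg k m) (fun m => tAux_le k hk m)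
  exact tendsto_one_div_add_atTop_nhds_zero_nat

/-- `(p_m)_{m ≥ 0}` is a probability mass function. -/
theorem ktree_outdegree_limit_pmf (k : ℕ) (hk : 1 ≤ k) :
    (∀ m : ℕ, 0 ≤ pLim k m) ∧ ∑' m : ℕ, pLim k m = 1 := by
  have hnonneg : ∀ m : ℕ, 0 ≤ pLim k m := by
    intro m
    rw [pLim_eq hk m]
    have h1 : tAux k (m + 1) = tAux k m * (((m : ℝ) + 1) / ((m : ℝ) + 2 + 1 / (k : ℝ))) :=
      Finset.prod_range_succ _ _
    have hk' : (0:ℝ) < k := by exact_mod_cast hk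
    have hfrac : ((m : ℝ) + 1) / ((m : ℝ) + 2 + 1 / (k : ℝ)) ≤ 1 := by
      rw [div_le_one (by positivity)]
      have : (0:ℝ) ≤ 1 / (k : ℝ) := by positivity
      linarith
    have := tAux_nonneg k m
    nlinarith [tAux_nonneg k m]
  refine ⟨hnonneg, ?_⟩
  have hsum : HasSum (pLim k) 1 := by
    rw [hasSum_iff_tendsto_nat_of_nonneg hnonneg]
    have heq : ∀ n : ℕ, ∑ i ∈ Finset.range n, pLim k i = 1 - tAux k n := by
      intro n
      have : ∑ i ∈ Finset.range n, pLim k i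
          = ∑ i ∈ Finset.range n, (tAux k i - tAux k (i + 1)) :=
        Finset.sum_congr rfl fun i _ => pLim_eq hk i
      rw [this, Finset.sum_range_sub' (fun i => tAux k i) n]
      have : tAux k 0 = 1 := by simp [tAux]
      rw [this]
    simp only [heq]
    have := (tAux_tendsto k hk).const_sub 1
    simpa using this
  exact hsum.tsum_eq
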